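/- Let f = z_1^{k+1} + z_2^2 + z_3^2 with k ≥ 1. The C-algebra C[y_1,y_2,y_3]/((k+1)y_1^k, 1 + y_3^2, 2y_2y_3) (the Jacobian algebra of f̄ = y_1^{k+1} + y_2 + y_2y_3^2) is isomorphic as a C-algebra to C[y_1,y_3]/(y_1^k, y_3^2 + 1), and has dimension 2k over C. -/

import Mathlib

open MvPolynomial

noncomputable section JacobianAux

namespace Stmt17
open Polynomial

abbrev Rk (k : ℕ) : Type := AdjoinRoot ((X : ℂ[X]) ^ k)
abbrev Sk (k : ℕ) : Type := AdjoinRoot ((X : (Rk k)[X]) ^ 2 + 1)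

abbrev IB (k : ℕ) : Ideal (MvPolynomial (Fin 2) ℂ) :=
  Ideal.span ({MvPolynomial.X 0 ^ k, MvPolynomial.X 1 ^ 2 + 1} : Set (MvPolynomial (Fin 2) ℂ))

abbrev Bquot (k : ℕ) : Type := MvPolynomial (Fin 2) ℂ ⧸ IB k

abbrev mkB (k : ℕ) : MvPolynomial (Fin 2) ℂ →ₐ[ℂ] Bquot k := Ideal.Quotient.mkₐ ℂ (IB k)

lemma xb0_pow (k : ℕ) : (mkB k (MvPolynomial.X 0)) ^ k = 0 := by
  rw [← map_pow]
  show Ideal.Quotient.mk (IB k) _ = 0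
  exact (Ideal.Quotient.eq_zero_iff_mem).2 (Ideal.subset_span (by simp))

lemma xb1_sq (k : ℕ) : (mkB k (MvPolynomial.X 1)) ^ 2 + 1 = 0 := by
  have : mkB k (MvPolynomial.X 1 ^ 2 + 1) = 0 := by
    show Ideal.Quotient.mk (IB k) _ = 0
    exact (Ideal.Quotient.eq_zero_iff_mem).2 (Ideal.subset_span (by simp))
  simpa using this

/-- `Rk k → Bquot k` -/
def rho (k : ℕ) : Rk k →ₐ[ℂ] Bquot k :=
  AdjoinRoot.liftAlgHom _ (Algebra.ofId ℂ _) (mkB k (MvPolynomial.X 0)) (by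
    simp only [Polynomial.eval₂_X_pow]; exact xb0_pow k)

/-- `Sk k → Bquot k` as ring hom -/
def sigma0 (k : ℕ) : Sk k →+* Bquot k :=
  AdjoinRoot.lift (rho k : Rk k →+* Bquot k) (mkB k (MvPolynomial.X 1)) (by
    simp only [Polynomial.eval₂_add, Polynomial.eval₂_pow, Polynomial.eval₂_X, Polynomial.eval₂_one]
    exact xb1_sq k)

/-- `Sk k → Bquot k` as ℂ-algebra hom -/
def sigma (k : ℕ) : Sk k →ₐ[ℂ] Bquot k :=
  { sigma0 k with
    commutes' := fun c => by
      rw [AdjoinRoot.algebraMap_eq' ℂ, RingHom.comp_apply]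
      show sigma0 k (AdjoinRoot.of _ _) = _
      rw [sigma0, AdjoinRoot.lift_of]
      exact (rho k).commutes c }

/-- `MvPolynomial (Fin 2) ℂ → Sk k` -/
def toS (k : ℕ) : MvPolynomial (Fin 2) ℂ →ₐ[ℂ] Sk k :=
  MvPolynomial.aeval ![algebraMap (Rk k) (Sk k) (AdjoinRoot.root _), AdjoinRoot.root _]

lemma rootR_pow (k : ℕ) : (AdjoinRoot.root ((X : ℂ[X]) ^ k)) ^ k = 0 := by
  rw [AdjoinRoot.root, ← map_pow, AdjoinRoot.mk_self]

lemma rootS_sq (k : ℕ) : (AdjoinRoot.root ((X : (Rk k)[X]) ^ 2 + 1)) ^ 2 + 1 = 0 := by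
  have h := AdjoinRoot.mk_self (f := (X : (Rk k)[X]) ^ 2 + 1)
  rw [map_add, map_pow, map_one, AdjoinRoot.mk_X] at h
  rw [AdjoinRoot.root]
  rw [AdjoinRoot.mk_X]
  exact h

lemma toS_mem (k : ℕ) : ∀ p ∈ IB k, toS k p = 0 := by
  intro p hp
  refine Submodule.span_induction ?_ ?_ ?_ ?_ hp
  · rintro q (rfl | rfl)
    · rw [map_pow, show (toS k) (MvPolynomial.X 0) = algebraMap (Rk k) (Sk k)
          (AdjoinRoot.root _) by simp [toS], ← map_pow, rootR_pow, map_zero]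
    · simp only [toS, map_add, map_pow, MvPolynomial.aeval_X, Matrix.cons_val_one,
        Matrix.head_cons, Matrix.cons_val_zero, map_one, rootS_sq]
  · simp
  · intro x y _ _ hx hy; simp [hx, hy]
  · intro a x _ hx; simp [hx]

/-- `Bquot k → Sk k` -/
def phi (k : ℕ) : Bquot k →ₐ[ℂ] Sk k :=
  Ideal.Quotient.liftₐ (IB k) (toS k) (toS_mem k)

def equivBS (k : ℕ) : Bquot k ≃ₐ[ℂ] Sk k := by
  refine AlgEquiv.ofAlgHom (phi k) (sigma k) ?_ ?_
  · -- phi ∘ sigma = id on Sk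
    have hR : ∀ r : Rk k, phi k (sigma k (algebraMap (Rk k) (Sk k) r)) = algebraMap (Rk k) (Sk k) r := by
      have : ((phi k).comp (sigma k)).comp (IsScalarTower.toAlgHom ℂ (Rk k) (Sk k)) =
          IsScalarTower.toAlgHom ℂ (Rk k) (Sk k) := by
        apply AdjoinRoot.algHom_ext
        show phi k (sigma k (algebraMap (Rk k) (Sk k) (AdjoinRoot.root _))) = _
        rw [AdjoinRoot.algebraMap_eq]
        show phi k (sigma0 k (AdjoinRoot.of _ _)) = _
        rw [sigma0, AdjoinRoot.lift_of]
        show phi k ((rho k) (AdjoinRoot.root _)) = _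
        rw [rho, AdjoinRoot.liftAlgHom_root]
        show toS k (MvPolynomial.X 0) = _
        simp [toS]
      intro r
      exact congrArg (fun f => f r) (congrArg (fun (f : _ →ₐ[ℂ] _) => (f : Rk k → Sk k)) this)
    let tau : Sk k →ₐ[Rk k] Sk k :=
      { ((phi k).comp (sigma k)).toRingHom with
        commutes' := hR }
    have htau : tau = AlgHom.id (Rk k) (Sk k) := by
      apply AdjoinRoot.algHom_ext
      show phi k (sigma0 k (AdjoinRoot.root _)) = AdjoinRoot.root _
      rw [sigma0, AdjoinRoot.lift_root]
      show toS k (MvPolynomial.X 1) = _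
      simp [toS]
    refine AlgHom.ext fun x => ?_
    exact AlgHom.congr_fun htau x
  · -- sigma ∘ phi = id on Bquot
    apply Ideal.Quotient.algHom_ext
    apply MvPolynomial.algHom_ext
    intro i
    fin_cases i
    · show sigma0 k (toS k (MvPolynomial.X 0)) = mkB k (MvPolynomial.X 0)
      simp only [toS, MvPolynomial.aeval_X, Matrix.cons_val_zero]
      rw [AdjoinRoot.algebraMap_eq]
      show sigma0 k (AdjoinRoot.of _ (AdjoinRoot.root _)) = _
      rw [sigma0, AdjoinRoot.lift_of]
      show (rho k) (AdjoinRoot.root _) = _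
      rw [rho, AdjoinRoot.liftAlgHom_root]
    · show sigma0 k (toS k (MvPolynomial.X 1)) = mkB k (MvPolynomial.X 1)
      simp only [toS, MvPolynomial.aeval_X, Matrix.cons_val_one, Matrix.head_cons,
        Matrix.cons_val_zero]
      rw [sigma0, AdjoinRoot.lift_root]


end Stmt17

namespace Stmt17b
open MvPolynomial

abbrev IB (k : ℕ) : Ideal (MvPolynomial (Fin 2) ℂ) :=
  Ideal.span ({X 0 ^ k, X 1 ^ 2 + 1} : Set (MvPolynomial (Fin 2) ℂ))

abbrev Bquot (k : ℕ) : Type := MvPolynomial (Fin 2) ℂ ⧸ IB k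

abbrev mkB (k : ℕ) : MvPolynomial (Fin 2) ℂ →ₐ[ℂ] Bquot k := Ideal.Quotient.mkₐ ℂ (IB k)

abbrev IA (k : ℕ) : Ideal (MvPolynomial (Fin 3) ℂ) :=
  Ideal.span ({C ((k : ℂ) + 1) * X 0 ^ k, 1 + X 2 ^ 2, 2 * X 1 * X 2} :
    Set (MvPolynomial (Fin 3) ℂ))

abbrev Aquot (k : ℕ) : Type := MvPolynomial (Fin 3) ℂ ⧸ IA k

abbrev mkA (k : ℕ) : MvPolynomial (Fin 3) ℂ →ₐ[ℂ] Aquot k := Ideal.Quotient.mkₐ ℂ (IA k)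

lemma mA1 (k : ℕ) : (X 0 ^ k : MvPolynomial (Fin 3) ℂ) ∈ IA k := by
  have h : ((k : ℂ) + 1) ≠ 0 := Nat.cast_add_one_ne_zero k
  have key : (X 0 ^ k : MvPolynomial (Fin 3) ℂ) =
      C ((k : ℂ) + 1)⁻¹ * (C ((k : ℂ) + 1) * X 0 ^ k) := by
    rw [← mul_assoc, ← C_mul, inv_mul_cancel₀ h, C_1, one_mul]
  rw [key]
  exact Ideal.mul_mem_left _ _ (Ideal.subset_span (by simp))

lemma mA2 (k : ℕ) : (1 + X 2 ^ 2 : MvPolynomial (Fin 3) ℂ) ∈ IA k :=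
  Ideal.subset_span (by simp)

lemma mA3 (k : ℕ) : (X 1 : MvPolynomial (Fin 3) ℂ) ∈ IA k := by
  have h2 : (C ((2 : ℂ)⁻¹) : MvPolynomial (Fin 3) ℂ) * 2 = 1 := by
    rw [← map_ofNat (C : ℂ →+* MvPolynomial (Fin 3) ℂ) 2, ← C_mul,
      inv_mul_cancel₀ two_ne_zero, C_1]
  have key : (X 1 : MvPolynomial (Fin 3) ℂ) =
      X 1 * (1 + X 2 ^ 2) - C ((2 : ℂ)⁻¹) * X 2 * (2 * X 1 * X 2) := by
    linear_combination ((X 1 : MvPolynomial (Fin 3) ℂ) * X 2 ^ 2) * h2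
  rw [key]
  exact Ideal.sub_mem _ (Ideal.mul_mem_left _ _ (mA2 k))
    (Ideal.mul_mem_left _ _ (Ideal.subset_span (by simp)))

lemma xb0_pow (k : ℕ) : (mkB k (X 0)) ^ k = 0 := by
  rw [← map_pow]
  show Ideal.Quotient.mk (IB k) _ = 0
  exact (Ideal.Quotient.eq_zero_iff_mem).2 (Ideal.subset_span (by simp))

lemma xb1_sq (k : ℕ) : (mkB k (X 1)) ^ 2 + 1 = 0 := by
  have : mkB k (X 1 ^ 2 + 1) = 0 := by
    show Ideal.Quotient.mk (IB k) _ = 0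
    exact (Ideal.Quotient.eq_zero_iff_mem).2 (Ideal.subset_span (by simp))
  simpa using this

def toB (k : ℕ) : MvPolynomial (Fin 3) ℂ →ₐ[ℂ] Bquot k :=
  aeval ![mkB k (X 0), 0, mkB k (X 1)]

def toA (k : ℕ) : MvPolynomial (Fin 2) ℂ →ₐ[ℂ] Aquot k :=
  aeval ![mkA k (X 0), mkA k (X 2)]

lemma toB_mem (k : ℕ) : ∀ p ∈ IA k, toB k p = 0 := by
  intro p hp
  refine Submodule.span_induction ?_ (by simp) (fun x y _ _ hx hy => by simp [hx, hy])
    (fun a x _ hx => by simp [hx]) hp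
  rintro q (rfl | rfl | rfl)
  · rw [map_mul, map_pow, show (toB k) (X 0) = mkB k (X 0) by simp [toB], xb0_pow,
      mul_zero]
  · rw [map_add, map_one, map_pow, show (toB k) (X 2) = mkB k (X 1) by simp [toB],
      add_comm, xb1_sq]
  · rw [map_mul, map_mul, show (toB k) (X 1) = 0 by simp [toB], mul_zero, zero_mul]

lemma toA_mem (k : ℕ) : ∀ p ∈ IB k, toA k p = 0 := by
  intro p hp
  refine Submodule.span_induction ?_ (by simp) (fun x y _ _ hx hy => by simp [hx, hy])
    (fun a x _ hx => by simp [hx]) hp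
  rintro q (rfl | rfl)
  · rw [map_pow, show (toA k) (X 0) = mkA k (X 0) by simp [toA], ← map_pow]
    exact (Ideal.Quotient.eq_zero_iff_mem).2 (mA1 k)
  · rw [map_add, map_one, map_pow, show (toA k) (X 1) = mkA k (X 2) by simp [toA],
      ← map_pow]
    have : mkA k (X 2 ^ 2 + 1) = 0 := by
      show Ideal.Quotient.mk (IA k) _ = 0
      rw [Ideal.Quotient.eq_zero_iff_mem, add_comm]
      exact mA2 k
    simpa using this

def phiAB (k : ℕ) : Aquot k →ₐ[ℂ] Bquot k :=
  Ideal.Quotient.liftₐ (IA k) (toB k) (toB_mem k)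

def psiBA (k : ℕ) : Bquot k →ₐ[ℂ] Aquot k :=
  Ideal.Quotient.liftₐ (IB k) (toA k) (toA_mem k)

def equivAB (k : ℕ) : Aquot k ≃ₐ[ℂ] Bquot k := by
  refine AlgEquiv.ofAlgHom (phiAB k) (psiBA k) ?_ ?_
  · apply Ideal.Quotient.algHom_ext
    apply MvPolynomial.algHom_ext
    intro i
    fin_cases i
    · show phiAB k (toA k (X 0)) = mkB k (X 0)
      rw [show (toA k) (X 0) = mkA k (X 0) by simp [toA]]
      show toB k (X 0) = _
      simp [toB]
    · show phiAB k (toA k (X 1)) = mkB k (X 1)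
      rw [show (toA k) (X 1) = mkA k (X 2) by simp [toA]]
      show toB k (X 2) = _
      simp [toB]
  · apply Ideal.Quotient.algHom_ext
    apply MvPolynomial.algHom_ext
    intro i
    fin_cases i
    · show psiBA k (toB k (X 0)) = mkA k (X 0)
      rw [show (toB k) (X 0) = mkB k (X 0) by simp [toB]]
      show toA k (X 0) = _
      simp [toA]
    · show psiBA k (toB k (X 1)) = mkA k (X 1)
      rw [show (toB k) (X 1) = 0 by simp [toB], map_zero]
      symm
      show Ideal.Quotient.mk (IA k) _ = 0
      exact (Ideal.Quotient.eq_zero_iff_mem).2 (mA3 k)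
    · show psiBA k (toB k (X 2)) = mkA k (X 2)
      rw [show (toB k) (X 2) = mkB k (X 1) by simp [toB]]
      show toA k (X 1) = _
      simp [toA]


end Stmt17b

end JacobianAux

/-- For `f̄ = y_1^{k+1} + y_2 + y_2 y_3^2` (`k ≥ 1`), the Jacobian algebra
`ℂ[y_1,y_2,y_3]/((k+1)y_1^k, 1 + y_3^2, 2 y_2 y_3)` is isomorphic as a `ℂ`-algebra
to `ℂ[y_1,y_3]/(y_1^k, y_3^2 + 1)` and has dimension `2k` over `ℂ`. -/
theorem stmt_17 (k : ℕ) (hk : 1 ≤ k) :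
    let A := MvPolynomial (Fin 3) ℂ ⧸
      Ideal.span ({C ((k : ℂ) + 1) * X 0 ^ k, 1 + X 2 ^ 2, 2 * X 1 * X 2} :
        Set (MvPolynomial (Fin 3) ℂ))
    let B := MvPolynomial (Fin 2) ℂ ⧸
      Ideal.span ({X 0 ^ k, X 1 ^ 2 + 1} : Set (MvPolynomial (Fin 2) ℂ))
    Nonempty (A ≃ₐ[ℂ] B) ∧ Module.finrank ℂ A = 2 * k := by
  intro A B
  have e1 : A ≃ₐ[ℂ] B := Stmt17b.equivAB k
  have e2 : B ≃ₐ[ℂ] Stmt17.Sk k := Stmt17.equivBS k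
  refine ⟨⟨e1⟩, ?_⟩
  rw [e1.toLinearEquiv.finrank_eq, e2.toLinearEquiv.finrank_eq]
  -- dimension of the AdjoinRoot tower
  have : Nontrivial (Stmt17.Rk k) :=
    AdjoinRoot.nontrivial _ (by simp [Polynomial.degree_X_pow]; omega)
  have hm : ((Polynomial.X : Polynomial (Stmt17.Rk k)) ^ 2 + 1).Monic := by monicity!
  have hdeg : ((Polynomial.X : Polynomial (Stmt17.Rk k)) ^ 2 + 1).natDegree = 2 := by
    rw [← map_one (Polynomial.C : Stmt17.Rk k →+* Polynomial (Stmt17.Rk k)),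
      Polynomial.natDegree_X_pow_add_C]
  let pbS := AdjoinRoot.powerBasis' hm
  let pbR := AdjoinRoot.powerBasis' (Polynomial.monic_X_pow (R := ℂ) (n := k))
  have hfree1 : Module.Free ℂ (Stmt17.Rk k) := Module.Free.of_basis pbR.basis
  have hfree2 : Module.Free (Stmt17.Rk k) (Stmt17.Sk k) := Module.Free.of_basis pbS.basis
  have h1 : Module.finrank ℂ (Stmt17.Rk k) = k := by
    rw [pbR.finrank, AdjoinRoot.powerBasis'_dim, Polynomial.natDegree_X_pow]
  have h2 : Module.finrank (Stmt17.Rk k) (Stmt17.Sk k) = 2 := by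
    rw [pbS.finrank, AdjoinRoot.powerBasis'_dim, hdeg]
  rw [← Module.finrank_mul_finrank ℂ (Stmt17.Rk k) (Stmt17.Sk k), h1, h2, Nat.mul_comm]
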